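/- Define the decorated Skorokhod space 𝔇[0,T] as the set of pairs (x, I) where x : [0,T] → ℝ is càdlàg and I = (I_t)_{t∈[0,T]} is a family of nonempty compact subsets of ℝ such that x(t−), x(t) ∈ I_t for all t, d_H(I_s, {x(t)}) → 0 as s ↓ t, and d_H(I_s, {x(t−)}) → 0 as s ↑ t. Then for every (x, I) ∈ 𝔇[0,T], the graph Γ(I) = { (t,z) ∈ [0,T]×ℝ : z ∈ I_t } is a compact subset of [0,T]×ℝ. -/

import Mathlib

open Filter Set Topology

/-- For an element `(x, I)` of the decorated Skorokhod space `𝔇[0,T]`, the graph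
`Γ(I) = {(t,z) : t ∈ [0,T], z ∈ I_t}` is compact. Here `xl` denotes the left-limit
function of the càdlàg path `x`, with the convention `xl 0 = x 0`. -/
theorem stmt3
    (T : ℝ) (hT : 0 < T)
    (x xl : ℝ → ℝ)
    (hx_rc : ∀ t ∈ Ico (0:ℝ) T, ContinuousWithinAt x (Ici t) t)
    (hxl : ∀ t ∈ Ioc (0:ℝ) T, Tendsto x (nhdsWithin t (Iio t)) (nhds (xl t)))
    (hxl0 : xl 0 = x 0)
    (I : ℝ → Set ℝ)
    (hI_ne : ∀ t ∈ Icc (0:ℝ) T, (I t).Nonempty)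
    (hI_cpt : ∀ t ∈ Icc (0:ℝ) T, IsCompact (I t))
    (hmem_r : ∀ t ∈ Icc (0:ℝ) T, x t ∈ I t)
    (hmem_l : ∀ t ∈ Icc (0:ℝ) T, xl t ∈ I t)
    (hright : ∀ t ∈ Icc (0:ℝ) T,
      Tendsto (fun s => Metric.hausdorffDist (I s) {x t})
        (nhdsWithin t (Ioi t ∩ Icc 0 T)) (nhds 0))
    (hleft : ∀ t ∈ Icc (0:ℝ) T,
      Tendsto (fun s => Metric.hausdorffDist (I s) {xl t})
        (nhdsWithin t (Iio t ∩ Icc 0 T)) (nhds 0)) :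
    IsCompact {p : ℝ × ℝ | p.1 ∈ Icc (0:ℝ) T ∧ p.2 ∈ I p.1} := by
  rw [isCompact_iff_isSeqCompact]
  intro u hu
  obtain ⟨t, htIcc, φ₁, hφ₁, hconv₁⟩ :=
    isCompact_Icc.tendsto_subseq (x := fun n => (u n).1) (fun n => (hu n).1)
  set v : ℕ → ℝ × ℝ := u ∘ φ₁ with hv
  have hvS : ∀ n, (v n).1 ∈ Icc (0:ℝ) T ∧ (v n).2 ∈ I (v n).1 := fun n => hu (φ₁ n)
  have hv1 : Tendsto (fun n => (v n).1) atTop (𝓝 t) := hconv₁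
  have key : ∀ (A : Set ℝ) (c : ℝ),
      Tendsto (fun s => Metric.hausdorffDist (I s) {c}) (𝓝[A] t) (𝓝 0) →
      c ∈ I t →
      ∀ (φ : ℕ → ℕ), StrictMono φ → (∀ n, (v (φ n)).1 ∈ A) →
      ∃ a ∈ {p : ℝ × ℝ | p.1 ∈ Icc (0:ℝ) T ∧ p.2 ∈ I p.1},
        ∃ ψ : ℕ → ℕ, StrictMono ψ ∧ Tendsto (u ∘ ψ) atTop (𝓝 a) := by
    intro A c hH hc φ hφ hA
    refine ⟨(t, c), ⟨htIcc, hc⟩, φ₁ ∘ φ, hφ₁.comp hφ, ?_⟩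
    have hs : Tendsto (fun n => (v (φ n)).1) atTop (𝓝[A] t) :=
      tendsto_nhdsWithin_of_tendsto_nhds_of_eventually_within _
        (hv1.comp hφ.tendsto_atTop) (Eventually.of_forall hA)
    have hHn : Tendsto (fun n => Metric.hausdorffDist (I ((v (φ n)).1)) {c})
        atTop (𝓝 0) := hH.comp hs
    have hd : Tendsto (fun n => (v (φ n)).2) atTop (𝓝 c) := by
      rw [tendsto_iff_dist_tendsto_zero]
      refine squeeze_zero (fun n => dist_nonneg) (fun n => ?_) hHn
      have hm := (hvS (φ n)).2
      have hcpt := hI_cpt _ (hvS (φ n)).1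
      have hne : (I ((v (φ n)).1)).Nonempty := ⟨_, hm⟩
      have hfin : EMetric.hausdorffEdist (I ((v (φ n)).1)) ({c} : Set ℝ) ≠ ⊤ :=
        Metric.hausdorffEdist_ne_top_of_nonempty_of_bounded hne ⟨c, rfl⟩
          hcpt.isBounded Bornology.isBounded_singleton
      have h := Metric.infDist_le_hausdorffDist_of_mem hm hfin
      simpa [Metric.infDist_singleton] using h
    have hpair : Tendsto (fun n => ((v (φ n)).1, (v (φ n)).2)) atTop (𝓝 (t, c)) := by
      rw [nhds_prod_eq]
      exact (hv1.comp hφ.tendsto_atTop).prodMk hd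
    exact hpair
  by_cases h1 : ∃ᶠ n in atTop, (v n).1 = t
  · obtain ⟨φ, hφ, hP⟩ := Filter.extraction_of_frequently_atTop h1
    have hz : ∀ n, (v (φ n)).2 ∈ I t := fun n => hP n ▸ (hvS (φ n)).2
    obtain ⟨z, hzI, ψ, hψ, hzconv⟩ := (hI_cpt t htIcc).tendsto_subseq hz
    refine ⟨(t, z), ⟨htIcc, hzI⟩, φ₁ ∘ (φ ∘ ψ), hφ₁.comp (hφ.comp hψ), ?_⟩
    have h1' : Tendsto (fun n => (v (φ (ψ n))).1) atTop (𝓝 t) := by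
      have : (fun n => (v (φ (ψ n))).1) = fun _ => t := funext fun n => hP (ψ n)
      rw [this]; exact tendsto_const_nhds
    have hpair : Tendsto (fun n => ((v (φ (ψ n))).1, (v (φ (ψ n))).2))
        atTop (𝓝 (t, z)) := by
      rw [nhds_prod_eq]
      exact h1'.prodMk hzconv
    exact hpair
  · by_cases h2 : ∃ᶠ n in atTop, t < (v n).1
    · obtain ⟨φ, hφ, hP⟩ := Filter.extraction_of_frequently_atTop h2
      exact key (Ioi t ∩ Icc 0 T) (x t) (hright t htIcc) (hmem_r t htIcc) φ hφ
        (fun n => ⟨hP n, (hvS (φ n)).1⟩)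
    · have h3 : ∀ᶠ n in atTop, (v n).1 < t := by
        filter_upwards [not_frequently.mp h1, not_frequently.mp h2] with n hn1 hn2
        exact lt_of_le_of_ne (not_lt.mp hn2) hn1
      obtain ⟨φ, hφ, hP⟩ := Filter.extraction_of_frequently_atTop h3.frequently
      exact key (Iio t ∩ Icc 0 T) (xl t) (hleft t htIcc) (hmem_l t htIcc) φ hφ
        (fun n => ⟨hP n, (hvS (φ n)).1⟩)
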